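/- Under the constraint b_n = −q^{2j_n−1}a_n for all n, the reference covector ⟨Ω| and reference vector |Ω̄⟩ satisfy, for all λ ∈ ℂˣ: ⟨Ω|A(λq^{1/2}) = a(λ)⟨Ω|, ⟨Ω|D(λq^{1/2}) = d(λ)⟨Ω|, ⟨Ω|B(λ) = 0; and A(λq^{1/2})|Ω̄⟩ = a(λq)|Ω̄⟩, D(λq^{1/2})|Ω̄⟩ = d(λ/q)|Ω̄⟩, B(λ)|Ω̄⟩ = 0; where a(λ) = ∏_{n=1}^N (λq^{j_n−1}α_n − β_n q^{1−j_n}λ^{−1}) and d(λ) = ∏_{n=1}^N (γ_n q^{j_n−1}λ^{−1} − λ q^{1−j_n}δ_n). -/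

import Mathlib

open Matrix Polynomial Filter Topology

noncomputable section

namespace SixV

/-- the local space index set `ℤ/(2l+1)ℤ` -/
abbrev Zp (l : ℕ) := ZMod (2 * l + 1)

/-- index set of the quantum space `H = (ℂ^p)^{⊗N}` -/
abbrev HIdx (l N : ℕ) := Fin N → Zp l

/-- operators on the quantum space `H` -/
abbrev Op (l N : ℕ) := Matrix (HIdx l N) (HIdx l N) ℂ

/-- clock matrix `v`, `v|k⟩ = q^k |k⟩` -/
def vM (l : ℕ) (q : ℂ) : Matrix (Zp l) (Zp l) ℂ := Matrix.diagonal fun k => q ^ k.val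

def vMinv (l : ℕ) (q : ℂ) : Matrix (Zp l) (Zp l) ℂ := Matrix.diagonal fun k => (q ^ k.val)⁻¹

/-- shift matrix `u`, `u|k⟩ = |k-1⟩` -/
def uM (l : ℕ) : Matrix (Zp l) (Zp l) ℂ := Matrix.of fun j k => if j = k - 1 then (1 : ℂ) else 0

def uMinv (l : ℕ) : Matrix (Zp l) (Zp l) ℂ := Matrix.of fun j k => if j = k + 1 then (1 : ℂ) else 0

/-- the Bazhanov-Stroganov Lax operator, a `2×2` matrix of `p×p` matrices;
`s` denotes the fixed square root `q^{1/2}` of `q`. -/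
def laxM (l : ℕ) (q s pα pβ pa pb pc pd lam : ℂ) :
    Matrix (Fin 2) (Fin 2) (Matrix (Zp l) (Zp l) ℂ) :=
  Matrix.of
    ![![(lam * pα) • vM l q - (pβ / lam) • vMinv l q,
        uM l * ((pa / s) • vM l q + (s * pb) • vMinv l q)],
      ![uMinv l * ((s * pc) • vM l q + (pd / s) • vMinv l q),
        (pa * pc / pα / lam) • vM l q - (pb * pd / pβ * lam) • vMinv l q]]

/-- the bulk parameters `α_n, β_n, a_n, b_n, c_n, d_n` of the `N`-site chain -/
structure BulkParams (N : ℕ) where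
  α : Fin N → ℂ
  β : Fin N → ℂ
  a : Fin N → ℂ
  b : Fin N → ℂ
  c : Fin N → ℂ
  d : Fin N → ℂ

def BulkParams.NonZero {N : ℕ} (P : BulkParams N) : Prop :=
  ∀ n, P.α n ≠ 0 ∧ P.β n ≠ 0 ∧ P.a n ≠ 0 ∧ P.b n ≠ 0 ∧ P.c n ≠ 0 ∧ P.d n ≠ 0

/-- embedding of a one-site operator at site `n` of the chain -/
def site (l N : ℕ) (n : Fin N) (A : Matrix (Zp l) (Zp l) ℂ) : Op l N :=
  Matrix.of fun x y =>
    A (x n) (y n) * ∏ m ∈ Finset.univ.erase n, (if x m = y m then (1 : ℂ) else 0)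

def laxSite (l N : ℕ) (q s : ℂ) (P : BulkParams N) (n : Fin N) (lam : ℂ) :
    Matrix (Fin 2) (Fin 2) (Op l N) :=
  Matrix.of fun i j =>
    site l N n (laxM l q s (P.α n) (P.β n) (P.a n) (P.b n) (P.c n) (P.d n) lam i j)

/-- bulk monodromy matrix `M(λ) = L_N(λ q^{-1/2}) ⋯ L_1(λ q^{-1/2})` -/
def mono (l N : ℕ) (q s : ℂ) (P : BulkParams N) (lam : ℂ) :
    Matrix (Fin 2) (Fin 2) (Op l N) :=
  (((List.finRange N).reverse).map fun n => laxSite l N q s P n (lam / s)).prod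

/-- boundary parameters `(ζ, κ, τ)` -/
structure Bdry where
  ζ : ℂ
  κ : ℂ
  τ : ℂ

/-- the general scalar solution `K(λ; ζ, κ, τ)` of the reflection equation -/
def kM (q s : ℂ) (B : Bdry) (lam : ℂ) : Matrix (Fin 2) (Fin 2) ℂ :=
  (B.ζ - B.ζ⁻¹)⁻¹ •
    Matrix.of
      ![![lam * B.ζ / s - s / (lam * B.ζ), B.κ * Complex.exp B.τ * (lam ^ 2 / q - q / lam ^ 2)],
        ![B.κ * Complex.exp (-B.τ) * (lam ^ 2 / q - q / lam ^ 2),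
          s * B.ζ / lam - lam / (B.ζ * s)]]

/-- lift of a scalar `2×2` matrix to a `2×2` matrix of operators on `H` -/
def lift2 (l N : ℕ) (K : Matrix (Fin 2) (Fin 2) ℂ) : Matrix (Fin 2) (Fin 2) (Op l N) :=
  Matrix.of fun i j => K i j • (1 : Op l N)

/-- the Pauli matrix `σ^y` acting on the auxiliary space -/
def sigY (l N : ℕ) : Matrix (Fin 2) (Fin 2) (Op l N) :=
  Matrix.of ![![0, (-Complex.I) • (1 : Op l N)], ![Complex.I • (1 : Op l N), 0]]

/-- `M̂(λ) = (-1)^N σ^y M(1/λ)^{t_a} σ^y` (transposition in the auxiliary indices only) -/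
def mHat (l N : ℕ) (q s : ℂ) (P : BulkParams N) (lam : ℂ) :
    Matrix (Fin 2) (Fin 2) (Op l N) :=
  ((-1 : ℂ) ^ N) • (sigY l N * (mono l N q s P lam⁻¹).transpose * sigY l N)

/-- the boundary monodromy matrix `U_-(λ) = M(λ) K_-(λ) M̂(λ)` -/
def uBdry (l N : ℕ) (q s : ℂ) (P : BulkParams N) (Bm : Bdry) (lam : ℂ) :
    Matrix (Fin 2) (Fin 2) (Op l N) :=
  mono l N q s P lam * lift2 l N (kM q s Bm lam) * mHat l N q s P lam

def opA (l N : ℕ) (q s : ℂ) (P : BulkParams N) (Bm : Bdry) (lam : ℂ) : Op l N :=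
  uBdry l N q s P Bm lam 0 0
def opB (l N : ℕ) (q s : ℂ) (P : BulkParams N) (Bm : Bdry) (lam : ℂ) : Op l N :=
  uBdry l N q s P Bm lam 0 1
def opC (l N : ℕ) (q s : ℂ) (P : BulkParams N) (Bm : Bdry) (lam : ℂ) : Op l N :=
  uBdry l N q s P Bm lam 1 0
def opD (l N : ℕ) (q s : ℂ) (P : BulkParams N) (Bm : Bdry) (lam : ℂ) : Op l N :=
  uBdry l N q s P Bm lam 1 1

/-- transfer matrix with the general boundary matrix `K_+(λ) = K(λq; ζ_+, κ_+, τ_+)` -/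
def transferGen (l N : ℕ) (q s : ℂ) (P : BulkParams N) (Bp Bm : Bdry) (lam : ℂ) : Op l N :=
  (lift2 l N (kM q s Bp (lam * q)) * uBdry l N q s P Bm lam).trace

/-- the upper-triangular `K_+` boundary matrix: `K(λq; ζ_+, κ_+, τ_+)` with `(1,2)` entry `0` -/
def kTriPlus (q s : ℂ) (B : Bdry) (lam : ℂ) : Matrix (Fin 2) (Fin 2) ℂ :=
  Matrix.of ![![kM q s B (lam * q) 0 0, 0], ![kM q s B (lam * q) 1 0, kM q s B (lam * q) 1 1]]

/-- transfer matrix with triangular `K_+` -/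
def transferTri (l N : ℕ) (q s : ℂ) (P : BulkParams N) (Bp Bm : Bdry) (lam : ℂ) : Op l N :=
  (lift2 l N (kTriPlus q s Bp lam) * uBdry l N q s P Bm lam).trace

/-- the scalar value `d_q M(λ)` of the bulk quantum determinant -/
def dqM (N : ℕ) (q : ℂ) (P : BulkParams N) (lam : ℂ) : ℂ :=
  (-q) ^ N * ∏ n, (P.β n * P.a n * P.c n / P.α n *
    (lam⁻¹ + q⁻¹ * P.b n * P.α n * lam / (P.a n * P.β n)) *
    (lam⁻¹ + q⁻¹ * P.d n * P.α n * lam / (P.c n * P.β n)))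

/-- the bulk function `a(λ)` -/
def aBulk (N : ℕ) (q a0 : ℂ) (P : BulkParams N) (lam : ℂ) : ℂ :=
  a0 * ∏ n, (P.β n / lam + q⁻¹ * P.b n * P.α n * lam / P.a n)

/-- the bulk function `d(λ)` -/
def dBulk (N : ℕ) (q a0 : ℂ) (P : BulkParams N) (lam : ℂ) : ℂ :=
  ((-1 : ℂ) ^ N / a0) *
    ∏ n, (P.a n * P.c n / P.α n * (lam⁻¹ + q * P.d n * P.α n * lam / (P.c n * P.β n)))

/-- the boundary function `g_-(λ)` -/
def gMin (s αm βm lam : ℂ) : ℂ :=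
  (lam * αm / s - s / (lam * αm)) * (lam * βm / s + s / (lam * βm)) /
    ((αm - αm⁻¹) * (βm + βm⁻¹))

/-- the function `𝖠_-(λ) = g_-(λ) a(λ q^{-1/2}) d(q^{-1/2} λ^{-1})` -/
def AAm (N : ℕ) (q s a0 αm βm : ℂ) (P : BulkParams N) (lam : ℂ) : ℂ :=
  gMin s αm βm lam * aBulk N q a0 P (lam / s) * dBulk N q a0 P (s * lam)⁻¹

/-- `a_0 = (-q)^N ∏_n q^{-j_n}` -/
def a0def (N : ℕ) (q : ℂ) (j : Fin N → ℕ) : ℂ := (-q) ^ N * ∏ n, (q ^ (j n))⁻¹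

/-- the coefficient `𝖺_+(λ)` -/
def aPl (q s ζp lam : ℂ) : ℂ :=
  (lam ^ 2 * q - 1 / (q * lam ^ 2)) * (lam * ζp / s - s / (lam * ζp)) /
    ((lam ^ 2 - 1 / lam ^ 2) * (ζp - ζp⁻¹))

/-- the coefficient `𝖽_+(λ)` -/
def dPl (q s ζp lam : ℂ) : ℂ :=
  (lam ^ 2 * q - 1 / (q * lam ^ 2)) * (ζp * s / lam - lam / (s * ζp)) /
    ((lam ^ 2 - 1 / lam ^ 2) * (ζp - ζp⁻¹))

/-- the function `k(λ)` -/
def kFun (q lam : ℂ) : ℂ := (lam ^ 2 - 1 / lam ^ 2) / (lam ^ 2 / q ^ 2 - q ^ 2 / lam ^ 2)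

/-- the separation points `ξ_n^{(h)} = μ_{n,+} q^{h+1/2}` -/
def xiP (N : ℕ) (q s : ℂ) (muP : Fin N → ℂ) (n : Fin N) (h : ℕ) : ℂ := muP n * q ^ h * s

/-- `X_n^{(h)} = (ξ_n^{(h)})^2 + (ξ_n^{(h)})^{-2}` -/
def XVal (N : ℕ) (q s : ℂ) (muP : Fin N → ℂ) (n : Fin N) (h : ℕ) : ℂ :=
  (xiP N q s muP n h) ^ 2 + ((xiP N q s muP n h) ^ 2)⁻¹

/-- the `B_-`-eigenvalue function `b_h(λ)` -/
def bEig (N : ℕ) (q s : ℂ) (Bm : Bdry) (P : BulkParams N) (muP : Fin N → ℂ)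
    (h : Fin N → ℕ) (lam : ℂ) : ℂ :=
  Bm.κ * Complex.exp Bm.τ * ((lam ^ 2 / q - q / lam ^ 2) / (Bm.ζ - Bm.ζ⁻¹)) *
    ∏ n, (P.α n * P.β n *
      (lam / xiP N q s muP n (h n) - xiP N q s muP n (h n) / lam) *
      ((lam * xiP N q s muP n (h n))⁻¹ - lam * xiP N q s muP n (h n)))

/-- the reference covector `⟨Ω| = ⊗_n ⟨j_n - 1|` -/
def refL (l N : ℕ) (j : Fin N → ℕ) : HIdx l N → ℂ :=
  fun x => ∏ n, (if x n = (j n : Zp l) - 1 then (1 : ℂ) else 0)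

/-- the reference vector `|Ω̄⟩ = ⊗_n |j_n⟩` -/
def refR (l N : ℕ) (j : Fin N → ℕ) : HIdx l N → ℂ :=
  fun x => ∏ n, (if x n = (j n : Zp l) then (1 : ℂ) else 0)

/-- the operator `∏_n ∏_{k=1}^{h_n} A_-(1/ξ_n^{(k-1)}) / 𝖠_-(1/ξ_n^{(k-1)})` -/
def leftOp (l N : ℕ) (q s a0 αm βm : ℂ) (P : BulkParams N) (Bm : Bdry) (muP : Fin N → ℂ)
    (h : Fin N → ℕ) : Op l N :=
  ((List.finRange N).map fun n =>
    (((List.range (h n)).map fun k =>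
      (AAm N q s a0 αm βm P ((xiP N q s muP n k)⁻¹))⁻¹ •
        opA l N q s P Bm ((xiP N q s muP n k)⁻¹)).prod)).prod

/-- the left SoV covector `⟨h|` -/
def leftSoV (l N : ℕ) (q s a0 αm βm : ℂ) (P : BulkParams N) (Bm : Bdry) (muP : Fin N → ℂ)
    (j h : Fin N → ℕ) : HIdx l N → ℂ :=
  Matrix.vecMul (refL l N j) (leftOp l N q s a0 αm βm P Bm muP h)

/-- the operator `∏_n ∏_{k=h_n}^{p-2} D_-(ξ_n^{(k+1)})/(k(ξ_n^{(k+1)}) 𝖠_-(1/ξ_n^{(k)}))` -/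
def rightOp (l N : ℕ) (q s a0 αm βm : ℂ) (P : BulkParams N) (Bm : Bdry) (muP : Fin N → ℂ)
    (h : Fin N → ℕ) : Op l N :=
  ((List.finRange N).map fun n =>
    (((List.range' (h n) (2 * l - h n)).map fun k =>
      (kFun q (xiP N q s muP n (k + 1)) * AAm N q s a0 αm βm P ((xiP N q s muP n k)⁻¹))⁻¹ •
        opD l N q s P Bm (xiP N q s muP n (k + 1))).prod)).prod

/-- the right SoV vector `|h⟩` -/
def rightSoV (l N : ℕ) (q s a0 αm βm : ℂ) (P : BulkParams N) (Bm : Bdry) (muP : Fin N → ℂ)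
    (j h : Fin N → ℕ) : HIdx l N → ℂ :=
  Matrix.mulVec (rightOp l N q s a0 αm βm P Bm muP h) (refR l N j)

/-- the condition (E-SOV) -/
def ESOV (N p : ℕ) (muP : Fin N → ℂ) : Prop :=
  ∀ n m : Fin N, n ≠ m → (muP n) ^ p ≠ (muP m) ^ p

/-- the condition (SoV-2) -/
def SOV2 (N l : ℕ) (q αm βm : ℂ) (muP muM : Fin N → ℂ) : Prop :=
  (∀ n, (muP n) ^ (2 * (2 * l + 1)) ≠ 1 ∧ (muP n) ^ (2 * (2 * l + 1)) ≠ -1) ∧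
  (∀ ε : ℤ, ε = 1 ∨ ε = -1 → ∀ h : ℕ, 1 ≤ h → h ≤ 2 * l → ∀ n m : Fin N,
    (muP n) ^ 2 ≠ q ^ (-2 * (h : ℤ)) * αm ^ (2 * ε) ∧
    (muP n) ^ 2 ≠ -(q ^ (-2 * (h : ℤ)) * βm ^ (2 * ε)) ∧
    (muP n) ^ 2 ≠ q ^ (-2 * ε - 2 * (h : ℤ)) * (muM m) ^ (2 * ε))

/-- the condition (cond-simple) -/
def CondSimple (N l : ℕ) (q ζp : ℂ) (muP : Fin N → ℂ) : Prop :=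
  ∀ h : ℕ, 1 ≤ h → h ≤ 2 * l → ∀ n : Fin N,
    (muP n) ^ 2 ≠ q ^ (-2 * (h : ℤ)) * ζp ^ 2 ∧
    (muP n) ^ 2 ≠ q ^ (-2 * (h : ℤ)) * ζp ^ (-2 : ℤ)

/-- the Vandermonde product `∏_{1 ≤ b < a ≤ N} (x_a - x_b)` -/
def vdm (N : ℕ) (x : Fin N → ℂ) : ℂ := ∏ a : Fin N, ∏ b ∈ Finset.Iio a, (x a - x b)

/-- the `p×p` Baxter matrix `D_{τ,f}(λ)` -/
def dMat (l : ℕ) (q : ℂ) (tf ff : ℂ → ℂ) (lam : ℂ) : Matrix (Zp l) (Zp l) ℂ :=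
  Matrix.of fun j k =>
    if k = j then tf (q ^ j.val * lam)
    else if k = j + 1 then -ff ((q ^ j.val * lam)⁻¹)
    else if k = j - 1 then -ff (q ^ j.val * lam)
    else 0

/-- the coefficient `𝖺(λ) = 𝖺_+(λ) 𝖠_-(λ)` -/
def sfA (N : ℕ) (q s a0 αm βm ζp : ℂ) (P : BulkParams N) (lam : ℂ) : ℂ :=
  aPl q s ζp lam * AAm N q s a0 αm βm P lam

/-- the coefficient `ā(λ) = λ q^{-1/2} 𝖺(λ)` -/
def sfAbar (N : ℕ) (q s a0 αm βm ζp : ℂ) (P : BulkParams N) (lam : ℂ) : ℂ :=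
  lam / s * sfA N q s a0 αm βm ζp P lam

/-- the coefficient `𝖽(λ) = 𝖽_+(λ) 𝖣_-(λ)`, `𝖣_-(λ) = k(λ) 𝖠_-(q/λ)` -/
def sfD (N : ℕ) (q s a0 αm βm ζp : ℂ) (P : BulkParams N) (lam : ℂ) : ℂ :=
  dPl q s ζp lam * (kFun q lam * AAm N q s a0 αm βm P (q / lam))

/-- the asymptotic value `τ_∞` for the general transfer matrix -/
def tauInfGen (N : ℕ) (q : ℂ) (Bp Bm : Bdry) (P : BulkParams N) : ℂ :=
  Bp.κ * Bm.κ *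
    (Complex.exp (Bp.τ - Bm.τ) * (∏ n, (P.b n * P.d n / P.β n * (P.a n * P.c n / P.α n))) +
     Complex.exp (Bm.τ - Bp.τ) * (∏ n, (P.α n * P.β n))) /
    ((Bp.ζ - Bp.ζ⁻¹) * (Bm.ζ - Bm.ζ⁻¹))

/-- the asymptotic value `τ_∞` for the triangular `K_+` transfer matrix -/
def tauInfTri (N : ℕ) (Bp Bm : Bdry) (P : BulkParams N) : ℂ :=
  (-1 : ℂ) ^ N * Bp.κ * Bm.κ * Complex.exp (Bm.τ - Bp.τ) * (∏ n, (P.α n * P.β n)) /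
    ((Bp.ζ - Bp.ζ⁻¹) * (Bm.ζ - Bm.ζ⁻¹))

/-- the function `F(λ)` -/
def Ff (l N : ℕ) (q s : ℂ) (muP : Fin N → ℂ) (lam : ℂ) : ℂ :=
  ∏ n : Fin N,
    ((lam ^ (2 * l + 1) / (xiP N q s muP n 0) ^ (2 * l + 1) -
        (xiP N q s muP n 0) ^ (2 * l + 1) / lam ^ (2 * l + 1)) *
     (lam ^ (2 * l + 1) * (xiP N q s muP n 0) ^ (2 * l + 1) -
        (lam ^ (2 * l + 1) * (xiP N q s muP n 0) ^ (2 * l + 1))⁻¹))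

/-- the asymptotic value `ā_∞` -/
def abarInf (N : ℕ) (q αm βm : ℂ) (Bp Bm : Bdry) (P : BulkParams N) : ℂ :=
  (-1 : ℂ) ^ N * αm * βm * Bp.ζ * Bm.κ * (∏ n, (P.b n * P.c n)) /
    (q ^ (1 + N) * (Bp.ζ - Bp.ζ⁻¹) * (Bm.ζ - Bm.ζ⁻¹))

/-- the inhomogeneity `G(λ | x, y)` -/
def Gf (l N : ℕ) (q s a0 αm βm : ℂ) (Bp Bm : Bdry) (P : BulkParams N) (muP : Fin N → ℂ)
    (lam x y : ℂ) : ℂ :=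
  Ff l N q s muP lam *
    ((tauInfTri N Bp Bm P - q ^ (-(4 * (l : ℤ) * N)) * abarInf N q αm βm Bp Bm P) * x *
        ((lam / s - s / lam) * (s * lam - (s * lam)⁻¹) *
         (lam / (Complex.I * s) - Complex.I * s / lam) *
         (Complex.I * s * lam - (Complex.I * s * lam)⁻¹)) +
      (Complex.I - 1) * y * sfA N q s a0 αm βm Bp.ζ P (Complex.I * s) /
          (4 * Ff l N q s muP (Complex.I * s)) *
        ((lam * s - (lam * s)⁻¹) * (lam / s - (lam / s)⁻¹)))

/-- `τ` is an eigenvalue function of the family `T`, i.e. `τ ∈ Σ_T` -/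
def inSpec (l N : ℕ) (T : ℂ → Op l N) (tf : ℂ → ℂ) : Prop :=
  ∃ w : HIdx l N → ℂ, w ≠ 0 ∧ ∀ lam : ℂ, lam ≠ 0 → Matrix.mulVec (T lam) w = tf lam • w

/-- the joint eigenspace `E_τ` of the family `T` -/
def eigSp (l N : ℕ) (T : ℂ → Op l N) (tf : ℂ → ℂ) : Submodule ℂ (HIdx l N → ℂ) :=
  ⨅ lam : {x : ℂ // x ≠ 0},
    Module.End.eigenspace (Matrix.mulVecLin (T lam.1)) (tf lam.1)

/-- the admissible functional form of transfer matrix eigenvalues -/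
def admissible (N : ℕ) (q s tinf : ℂ) (Bp Bm : Bdry) (P : BulkParams N) (tf : ℂ → ℂ) : Prop :=
  (∃ Pol : Polynomial ℂ, Pol.degree ≤ ((N + 2 : ℕ) : WithBot ℕ) ∧
      Pol.coeff (N + 2) = tinf ∧
      ∀ lam : ℂ, lam ≠ 0 → tf lam = Pol.eval (lam ^ 2 + (lam ^ 2)⁻¹)) ∧
  tf s = (-1 : ℂ) ^ N * (q + q⁻¹) * dqM N q P 1 ∧
  tf (Complex.I * s) = (-1 : ℂ) ^ N * (q + q⁻¹) *
    ((Bp.ζ + Bp.ζ⁻¹) * (Bm.ζ + Bm.ζ⁻¹) / ((Bp.ζ - Bp.ζ⁻¹) * (Bm.ζ - Bm.ζ⁻¹))) *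
    dqM N q P Complex.I

/-- the separate state with coefficients `Q_a^{(h_a)}` in the right SoV basis -/
def sovVec (l N : ℕ) (q s a0 αm βm : ℂ) (P : BulkParams N) (Bm : Bdry) (muP : Fin N → ℂ)
    (j : Fin N → ℕ) (Q : Fin N → Zp l → ℂ) : HIdx l N → ℂ :=
  ∑ h : Fin N → Fin (2 * l + 1),
    ((∏ a, Q a ((h a : ℕ) : Zp l)) * vdm N (fun a => XVal N q s muP a ((h a : ℕ)))) •
      rightSoV l N q s a0 αm βm P Bm muP j (fun n => (h n : ℕ))

/-- the renormalized operator `B̂_-(λ)` -/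
def bHatOp (l N : ℕ) (q s : ℂ) (P : BulkParams N) (Bm : Bdry) (lam : ℂ) : Op l N :=
  ((Bm.ζ - Bm.ζ⁻¹) /
      (Bm.κ * Complex.exp Bm.τ * (lam ^ 2 / q - q / lam ^ 2) * ∏ n, (P.α n * P.β n))) •
    opB l N q s P Bm lam

/-- the state `|ω̄⟩` -/
def omegaBar (l N : ℕ) (q s a0 αm βm : ℂ) (P : BulkParams N) (Bm : Bdry) (muP : Fin N → ℂ)
    (j : Fin N → ℕ) : HIdx l N → ℂ :=
  ∑ h : Fin N → Fin (2 * l + 1),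
    (vdm N (fun a => XVal N q s muP a ((h a : ℕ)))) •
      rightSoV l N q s a0 αm βm P Bm muP j (fun n => (h n : ℕ))

/-- the recursively defined coefficients `t^{(h)}`:
`t^{(0)} = 1`, `t^{(1)} = F 0`, `t^{(h+2)} = F(h+1) t^{(h+1)} - G(h+1) t^{(h)}` -/
def tseq (F G : ℕ → ℂ) : ℕ → ℂ
  | 0 => 1
  | 1 => F 0
  | (h + 2) => F (h + 1) * tseq F G (h + 1) - G (h + 1) * tseq F G h

end SixV

namespace SixV

/-- support condition: `w` vanishes off `x n = t` -/
def Supp (l N : ℕ) (n : Fin N) (t : Zp l) (w : HIdx l N → ℂ) : Prop :=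
  ∀ x, x n ≠ t → w x = 0

lemma site_mulVec_apply (l N : ℕ) (n : Fin N) (A : Matrix (Zp l) (Zp l) ℂ)
    (w : HIdx l N → ℂ) (x : HIdx l N) :
    (site l N n A).mulVec w x = ∑ k : Zp l, A (x n) k * w (Function.update x n k) := by
  have hinj : ∀ k1 ∈ (Finset.univ : Finset (Zp l)), ∀ k2 ∈ Finset.univ,
      Function.update x n k1 = Function.update x n k2 → k1 = k2 := by
    intro k1 _ k2 _ h
    simpa using congrFun h n
  simp only [Matrix.mulVec, dotProduct, site, Matrix.of_apply]
  refine ((Finset.sum_subset (Finset.subset_univ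
      ((Finset.univ : Finset (Zp l)).image fun k => Function.update x n k)) ?_).symm.trans
    ((Finset.sum_image hinj).trans ?_))
  · intro y _ hy
    have hne : y ≠ Function.update x n (y n) := by
      intro h
      exact hy (Finset.mem_image.mpr ⟨y n, Finset.mem_univ _, h.symm⟩)
    obtain ⟨m, hm⟩ := Function.ne_iff.mp hne
    have hmn : m ≠ n := by
      rintro rfl; simp at hm
    rw [Function.update_of_ne hmn] at hm
    have : (∏ m ∈ Finset.univ.erase n, (if x m = y m then (1 : ℂ) else 0)) = 0 :=
      Finset.prod_eq_zero (Finset.mem_erase.mpr ⟨hmn, Finset.mem_univ _⟩)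
        (if_neg fun h => hm h.symm)
    rw [this, mul_zero, zero_mul]
  · refine Finset.sum_congr rfl fun k _ => ?_
    have h1 : (∏ m ∈ Finset.univ.erase n,
        (if x m = Function.update x n k m then (1 : ℂ) else 0)) = 1 := by
      refine Finset.prod_eq_one fun m hm => ?_
      rw [Function.update_of_ne (Finset.ne_of_mem_erase hm)]
      simp
    rw [Function.update_self, h1, mul_one]

lemma site_vecMul_apply (l N : ℕ) (n : Fin N) (A : Matrix (Zp l) (Zp l) ℂ)
    (w : HIdx l N → ℂ) (y : HIdx l N) :
    Matrix.vecMul w (site l N n A) y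
      = ∑ k : Zp l, w (Function.update y n k) * A k (y n) := by
  have hinj : ∀ k1 ∈ (Finset.univ : Finset (Zp l)), ∀ k2 ∈ Finset.univ,
      Function.update y n k1 = Function.update y n k2 → k1 = k2 := by
    intro k1 _ k2 _ h
    simpa using congrFun h n
  simp only [Matrix.vecMul, dotProduct, site, Matrix.of_apply]
  refine ((Finset.sum_subset (Finset.subset_univ
      ((Finset.univ : Finset (Zp l)).image fun k => Function.update y n k)) ?_).symm.trans
    ((Finset.sum_image hinj).trans ?_))
  · intro x _ hx
    have hne : x ≠ Function.update y n (x n) := by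
      intro h
      exact hx (Finset.mem_image.mpr ⟨x n, Finset.mem_univ _, h.symm⟩)
    obtain ⟨m, hm⟩ := Function.ne_iff.mp hne
    have hmn : m ≠ n := by
      rintro rfl; simp at hm
    rw [Function.update_of_ne hmn] at hm
    have : (∏ m' ∈ Finset.univ.erase n, (if x m' = y m' then (1 : ℂ) else 0)) = 0 :=
      Finset.prod_eq_zero (Finset.mem_erase.mpr ⟨hmn, Finset.mem_univ _⟩) (if_neg hm)
    rw [this, mul_zero, mul_zero]
  · refine Finset.sum_congr rfl fun k _ => ?_
    have h1 : (∏ m ∈ Finset.univ.erase n,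
        (if Function.update y n k m = y m then (1 : ℂ) else 0)) = 1 := by
      refine Finset.prod_eq_one fun m hm => ?_
      rw [Function.update_of_ne (Finset.ne_of_mem_erase hm)]
      simp
    rw [Function.update_self, h1, mul_one]


lemma site_mulVec_eig (l N : ℕ) (n : Fin N) (A : Matrix (Zp l) (Zp l) ℂ) (t : Zp l) (c : ℂ)
    (hA : ∀ i, A i t = if i = t then c else 0) (w : HIdx l N → ℂ) (hw : Supp l N n t w) :
    (site l N n A).mulVec w = c • w := by
  funext x
  rw [site_mulVec_apply]
  rw [Finset.sum_eq_single t]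
  · by_cases hx : x n = t
    · have hu : Function.update x n t = x := by rw [← hx]; exact Function.update_eq_self n x
      rw [hA, if_pos hx, hu]
      rfl
    · rw [hA, if_neg hx, zero_mul, Pi.smul_apply, hw x hx, smul_eq_mul, mul_zero]
  · intro k _ hk
    rw [hw (Function.update x n k) (by simpa using hk), mul_zero]
  · simp

lemma site_mulVec_zero (l N : ℕ) (n : Fin N) (A : Matrix (Zp l) (Zp l) ℂ) (t : Zp l)
    (hA : ∀ i, A i t = 0) (w : HIdx l N → ℂ) (hw : Supp l N n t w) :
    (site l N n A).mulVec w = 0 := by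
  funext x
  rw [site_mulVec_apply]
  rw [Finset.sum_eq_single t]
  · rw [hA, zero_mul]; rfl
  · intro k _ hk
    rw [hw (Function.update x n k) (by simpa using hk), mul_zero]
  · simp

lemma site_vecMul_eig (l N : ℕ) (n : Fin N) (A : Matrix (Zp l) (Zp l) ℂ) (t : Zp l) (c : ℂ)
    (hA : ∀ k, A t k = if t = k then c else 0) (w : HIdx l N → ℂ) (hw : Supp l N n t w) :
    Matrix.vecMul w (site l N n A) = c • w := by
  funext y
  rw [site_vecMul_apply]
  rw [Finset.sum_eq_single t]
  · by_cases hy : y n = t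
    · have hu : Function.update y n t = y := by rw [← hy]; exact Function.update_eq_self n y
      rw [hA, hy, if_pos rfl, hu, Pi.smul_apply, smul_eq_mul, mul_comm]
    · rw [hA, if_neg (fun h => hy h.symm), mul_zero, Pi.smul_apply, hw y hy, smul_eq_mul,
        mul_zero]
  · intro k _ hk
    rw [hw (Function.update y n k) (by simpa using hk), zero_mul]
  · simp

lemma site_vecMul_zero (l N : ℕ) (n : Fin N) (A : Matrix (Zp l) (Zp l) ℂ) (t : Zp l)
    (hA : ∀ k, A t k = 0) (w : HIdx l N → ℂ) (hw : Supp l N n t w) :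
    Matrix.vecMul w (site l N n A) = 0 := by
  funext y
  rw [site_vecMul_apply]
  rw [Finset.sum_eq_single t]
  · rw [hA, mul_zero]; rfl
  · intro k _ hk
    rw [hw (Function.update y n k) (by simpa using hk), zero_mul]
  · simp

lemma supp_site_mulVec (l N : ℕ) (n m : Fin N) (A : Matrix (Zp l) (Zp l) ℂ) (t : Zp l)
    (hmn : m ≠ n) (w : HIdx l N → ℂ) (hw : Supp l N m t w) :
    Supp l N m t ((site l N n A).mulVec w) := by
  intro x hx
  rw [site_mulVec_apply]
  refine Finset.sum_eq_zero fun k _ => ?_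
  rw [hw (Function.update x n k) (by rwa [Function.update_of_ne hmn]), mul_zero]

lemma supp_site_vecMul (l N : ℕ) (n m : Fin N) (A : Matrix (Zp l) (Zp l) ℂ) (t : Zp l)
    (hmn : m ≠ n) (w : HIdx l N → ℂ) (hw : Supp l N m t w) :
    Supp l N m t (Matrix.vecMul w (site l N n A)) := by
  intro y hy
  rw [site_vecMul_apply]
  refine Finset.sum_eq_zero fun k _ => ?_
  rw [hw (Function.update y n k) (by rwa [Function.update_of_ne hmn]), zero_mul]

lemma supp_smul (l N : ℕ) (n : Fin N) (t : Zp l) (c : ℂ) (w : HIdx l N → ℂ)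
    (hw : Supp l N n t w) : Supp l N n t (c • w) := by
  intro x hx
  rw [Pi.smul_apply, hw x hx, smul_eq_mul, mul_zero]

lemma supp_add (l N : ℕ) (n : Fin N) (t : Zp l) (w v : HIdx l N → ℂ)
    (hw : Supp l N n t w) (hv : Supp l N n t v) : Supp l N n t (w + v) := by
  intro x hx
  rw [Pi.add_apply, hw x hx, hv x hx, add_zero]

lemma supp_zero (l N : ℕ) (n : Fin N) (t : Zp l) : Supp l N n t (0 : HIdx l N → ℂ) :=
  fun _ _ => rfl


/-- right triangular action of a product of local 2x2 operator matrices -/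
lemma tri_right (l N : ℕ) (t : Fin N → Zp l) (F : Fin N → Matrix (Fin 2) (Fin 2) (Op l N))
    (f g : Fin N → ℂ)
    (hF : ∀ n w, Supp l N n (t n) w →
      (F n 0 1).mulVec w = 0 ∧ (F n 0 0).mulVec w = f n • w ∧ (F n 1 1).mulVec w = g n • w)
    (hPres : ∀ n (i j : Fin 2) (m : Fin N) (t' : Zp l) w, m ≠ n → Supp l N m t' w →
      Supp l N m t' ((F n i j).mulVec w)) :
    ∀ ns : List (Fin N), ns.Nodup → ∀ w : HIdx l N → ℂ,
      (∀ n ∈ ns, Supp l N n (t n) w) →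
      ((((ns.reverse.map F).prod) 0 1).mulVec w = 0 ∧
       (((ns.reverse.map F).prod) 0 0).mulVec w = (ns.map f).prod • w ∧
       (((ns.reverse.map F).prod) 1 1).mulVec w = (ns.map g).prod • w ∧
       ∀ (m : Fin N) (t' : Zp l), m ∉ ns → Supp l N m t' w →
         Supp l N m t' ((((ns.reverse.map F).prod) 1 0).mulVec w)) := by
  intro ns
  induction ns with
  | nil =>
    intro _ w _
    refine ⟨?_, ?_, ?_, ?_⟩
    · simp [Matrix.one_apply]
    · simp [Matrix.one_apply, Matrix.one_mulVec]
    · simp [Matrix.one_apply, Matrix.one_mulVec]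
    · intro m t' _ _
      simpa [Matrix.one_apply] using supp_zero l N m t'
  | cons n rest ih =>
    intro hnd w hw
    have hnrest : n ∉ rest := (List.nodup_cons.mp hnd).1
    have hndr : rest.Nodup := (List.nodup_cons.mp hnd).2
    have hwn : Supp l N n (t n) w := hw n ((List.mem_cons_self (a := n) (l := rest)))
    have hwrest : ∀ m ∈ rest, Supp l N m (t m) w :=
      fun m hm => hw m (List.mem_cons_of_mem n hm)
    obtain ⟨hB, hA, hD⟩ := hF n w hwn
    have hprod : ((n :: rest).reverse.map F).prod = ((rest.reverse.map F).prod) * F n := by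
      rw [List.reverse_cons, List.map_append, List.prod_append]
      simp
    set Q := (rest.reverse.map F).prod with hQ
    have hentry : ∀ i j : Fin 2, (((n :: rest).reverse.map F).prod i j).mulVec w
        = (Q i 0).mulVec ((F n 0 j).mulVec w) + (Q i 1).mulVec ((F n 1 j).mulVec w) := by
      intro i j
      rw [hprod, Matrix.mul_apply, Fin.sum_univ_two, Matrix.add_mulVec,
        Matrix.mulVec_mulVec, Matrix.mulVec_mulVec]
    -- the vector (F n 1 0).mulVec w satisfies the support conditions for rest
    have hv : ∀ m ∈ rest, Supp l N m (t m) ((F n 1 0).mulVec w) := by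
      intro m hm
      exact hPres n 1 0 m (t m) w (fun h => hnrest (h ▸ hm)) (hwrest m hm)
    obtain ⟨ihB, ihA, ihD, ihC⟩ := ih hndr w hwrest
    obtain ⟨ihB', ihA', ihD', ihC'⟩ := ih hndr _ hv
    refine ⟨?_, ?_, ?_, ?_⟩
    · rw [hentry 0 1, hB, Matrix.mulVec_zero, hD, Matrix.mulVec_smul, ihB, smul_zero,
        add_zero]
    · rw [hentry 0 0, hA, Matrix.mulVec_smul, ihA, ihB', add_zero, List.map_cons,
        List.prod_cons, smul_smul]
    · rw [hentry 1 1, hB, Matrix.mulVec_zero, hD, Matrix.mulVec_smul,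
        ihD, zero_add, List.map_cons, List.prod_cons, smul_smul]
    · intro m t' hm hwm
      have hmn : m ≠ n := fun h => hm (h ▸ (List.mem_cons_self (a := n) (l := rest)))
      have hmrest : m ∉ rest := fun h => hm (List.mem_cons_of_mem n h)
      rw [hentry 1 0, hA, Matrix.mulVec_smul]
      refine supp_add l N m t' _ _ (supp_smul l N m t' _ _ (ihC m t' hmrest hwm)) ?_
      rw [ihD']
      exact supp_smul l N m t' _ _ (hPres n 1 0 m t' w hmn hwm)

/-- left triangular action of a product of local 2x2 operator matrices -/
lemma tri_left (l N : ℕ) (t : Fin N → Zp l) (F : Fin N → Matrix (Fin 2) (Fin 2) (Op l N))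
    (f g : Fin N → ℂ)
    (hF : ∀ n w, Supp l N n (t n) w →
      (Matrix.vecMul w (F n 0 1) = 0 ∧ Matrix.vecMul w (F n 0 0) = f n • w ∧
       Matrix.vecMul w (F n 1 1) = g n • w))
    (hPres : ∀ n (i j : Fin 2) (m : Fin N) (t' : Zp l) w, m ≠ n → Supp l N m t' w →
      Supp l N m t' (Matrix.vecMul w (F n i j))) :
    ∀ ns : List (Fin N), ns.Nodup → ∀ w : HIdx l N → ℂ,
      (∀ n ∈ ns, Supp l N n (t n) w) →
      (Matrix.vecMul w (((ns.map F).prod) 0 1) = 0 ∧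
       Matrix.vecMul w (((ns.map F).prod) 0 0) = (ns.map f).prod • w ∧
       Matrix.vecMul w (((ns.map F).prod) 1 1) = (ns.map g).prod • w ∧
       ∀ (m : Fin N) (t' : Zp l), m ∉ ns → Supp l N m t' w →
         Supp l N m t' (Matrix.vecMul w (((ns.map F).prod) 1 0))) := by
  intro ns
  induction ns with
  | nil =>
    intro _ w _
    refine ⟨?_, ?_, ?_, ?_⟩
    · simp [Matrix.one_apply]
    · simp [Matrix.one_apply, Matrix.vecMul_one]
    · simp [Matrix.one_apply, Matrix.vecMul_one]
    · intro m t' _ _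
      simpa [Matrix.one_apply] using supp_zero l N m t'
  | cons n rest ih =>
    intro hnd w hw
    have hnrest : n ∉ rest := (List.nodup_cons.mp hnd).1
    have hndr : rest.Nodup := (List.nodup_cons.mp hnd).2
    have hwn : Supp l N n (t n) w := hw n ((List.mem_cons_self (a := n) (l := rest)))
    have hwrest : ∀ m ∈ rest, Supp l N m (t m) w :=
      fun m hm => hw m (List.mem_cons_of_mem n hm)
    obtain ⟨hB, hA, hD⟩ := hF n w hwn
    have hprod : ((n :: rest).map F).prod = F n * ((rest.map F).prod) := by
      rw [List.map_cons, List.prod_cons]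
    set Q := (rest.map F).prod with hQ
    have hentry : ∀ i j : Fin 2, Matrix.vecMul w (((n :: rest).map F).prod i j)
        = Matrix.vecMul (Matrix.vecMul w (F n i 0)) (Q 0 j)
          + Matrix.vecMul (Matrix.vecMul w (F n i 1)) (Q 1 j) := by
      intro i j
      rw [hprod, Matrix.mul_apply, Fin.sum_univ_two, Matrix.vecMul_add,
        Matrix.vecMul_vecMul, Matrix.vecMul_vecMul]
    have hv : ∀ m ∈ rest, Supp l N m (t m) (Matrix.vecMul w (F n 1 0)) := by
      intro m hm
      exact hPres n 1 0 m (t m) w (fun h => hnrest (h ▸ hm)) (hwrest m hm)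
    obtain ⟨ihB, ihA, ihD, ihC⟩ := ih hndr w hwrest
    obtain ⟨ihB', ihA', ihD', ihC'⟩ := ih hndr _ hv
    refine ⟨?_, ?_, ?_, ?_⟩
    · rw [hentry 0 1, hA, Matrix.smul_vecMul, ihB, smul_zero, hB, Matrix.zero_vecMul,
        add_zero]
    · rw [hentry 0 0, hA, Matrix.smul_vecMul, ihA, hB, Matrix.zero_vecMul, add_zero,
        List.map_cons, List.prod_cons, smul_smul]
    · rw [hentry 1 1, ihB', hD, Matrix.smul_vecMul, ihD, zero_add, List.map_cons,
        List.prod_cons, smul_smul]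
    · intro m t' hm hwm
      have hmn : m ≠ n := fun h => hm (h ▸ (List.mem_cons_self (a := n) (l := rest)))
      have hmrest : m ∉ rest := fun h => hm (List.mem_cons_of_mem n h)
      rw [hentry 1 0, ihA', hD, Matrix.smul_vecMul]
      refine supp_add l N m t' _ _ ?_ (supp_smul l N m t' _ _ (ihC m t' hmrest hwm))
      exact supp_smul l N m t' _ _ (hPres n 1 0 m t' w hmn hwm)


lemma laxM_00_apply (l : ℕ) (q s pα pβ pa pb pc pd lam : ℂ) (i k : Zp l) :
    laxM l q s pα pβ pa pb pc pd lam 0 0 i k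
      = if i = k then lam * pα * q ^ i.val - pβ / lam * (q ^ i.val)⁻¹ else 0 := by
  simp only [laxM, Matrix.of_apply, Matrix.cons_val', Matrix.cons_val_zero, Matrix.empty_val',
    Matrix.cons_val_fin_one, Matrix.sub_apply, Matrix.smul_apply, vM, vMinv,
    Matrix.diagonal_apply, smul_eq_mul]
  split_ifs <;> ring

lemma laxM_11_apply (l : ℕ) (q s pα pβ pa pb pc pd lam : ℂ) (i k : Zp l) :
    laxM l q s pα pβ pa pb pc pd lam 1 1 i k
      = if i = k then pa * pc / pα / lam * q ^ i.val - pb * pd / pβ * lam * (q ^ i.val)⁻¹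
        else 0 := by
  simp only [laxM, Matrix.of_apply, Matrix.cons_val', Matrix.cons_val_zero, Matrix.cons_val_one,
    Matrix.head_cons, Matrix.empty_val', Matrix.cons_val_fin_one, Matrix.head_fin_const,
    Matrix.sub_apply, Matrix.smul_apply, vM, vMinv, Matrix.diagonal_apply, smul_eq_mul]
  split_ifs <;> ring

lemma laxM_01_apply (l : ℕ) (q s pα pβ pa pb pc pd lam : ℂ) (i k : Zp l) :
    laxM l q s pα pβ pa pb pc pd lam 0 1 i k
      = if i = k - 1 then pa / s * q ^ k.val + s * pb * (q ^ k.val)⁻¹ else 0 := by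
  have h01 : laxM l q s pα pβ pa pb pc pd lam 0 1
      = uM l * ((pa / s) • vM l q + (s * pb) • vMinv l q) := by
    simp [laxM]
  rw [h01, Matrix.mul_apply]
  rw [Finset.sum_eq_single k]
  · simp only [uM, Matrix.of_apply, Matrix.add_apply, Matrix.smul_apply, vM, vMinv,
      Matrix.diagonal_apply_eq, smul_eq_mul, ite_mul, one_mul, zero_mul]
  · intro m _ hm
    simp only [Matrix.add_apply, Matrix.smul_apply, vM, vMinv, Matrix.diagonal_apply,
      if_neg hm, smul_eq_mul, mul_zero, add_zero]
  · simp


lemma qpow_val (l : ℕ) (q : ℂ) (hq0 : q ≠ 0) (hq1 : q ^ (2 * l + 1) = 1) (m : ℤ) :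
    (q : ℂ) ^ (((m : Zp l)).val) = q ^ m := by
  have h1 : ((((m : Zp l)).val : ℤ)) = m % ((2 * l + 1 : ℕ) : ℤ) := ZMod.val_intCast m
  have key : q ^ m = q ^ (m % ((2 * l + 1 : ℕ) : ℤ)) := by
    conv_lhs => rw [← Int.mul_ediv_add_emod m ((2 * l + 1 : ℕ) : ℤ)]
    rw [zpow_add₀ hq0, _root_.zpow_mul, zpow_natCast, hq1, _root_.one_zpow, one_mul]
  rw [← zpow_natCast q ((m : Zp l)).val, h1, ← key]


/-- the key vanishing scalar: column `j_n` of the `(0,1)` Lax entry vanishes -/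
lemma ccol_zero (q s a b X : ℂ) (hq0 : q ≠ 0) (hs0 : s ≠ 0) (hs : s ^ 2 = q) (hX : X ≠ 0)
    (hb : b = -(X ^ 2 * q⁻¹) * a) :
    a / s * X + s * b * X⁻¹ = 0 := by
  subst hb
  field_simp
  linear_combination (-(a * X)) * hs


/-- action of the bulk monodromy matrix entries on the reference
covector `⟨Ω|` and reference vector `|Ω̄⟩` under the constraint
`b_n = -q^{2 j_n - 1} a_n`. -/
theorem reference_states (l N : ℕ) (hl : 1 ≤ l) (hN : 1 ≤ N) (q s : ℂ)
    (hq : IsPrimitiveRoot q (2 * l + 1)) (hs : s ^ 2 = q)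
    (P : BulkParams N) (hP : P.NonZero)
    (j : Fin N → ℕ) (hj : ∀ n, j n ≤ 2 * l)
    (hcon : ∀ n, P.b n = -q ^ (2 * (j n : ℤ) - 1) * P.a n)
    (aJ dJ : ℂ → ℂ)
    (haJ : ∀ lam : ℂ, aJ lam =
      ∏ n, (lam * q ^ ((j n : ℤ) - 1) * P.α n - P.β n * q ^ (1 - (j n : ℤ)) / lam))
    (hdJ : ∀ lam : ℂ, dJ lam =
      ∏ n, (P.a n * P.c n / P.α n * q ^ ((j n : ℤ) - 1) / lam -
        lam * q ^ (1 - (j n : ℤ)) * (P.b n * P.d n / P.β n))) :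
    ∀ lam : ℂ, lam ≠ 0 →
      Matrix.vecMul (refL l N j) (mono l N q s P (lam * s) 0 0) = aJ lam • refL l N j ∧
      Matrix.vecMul (refL l N j) (mono l N q s P (lam * s) 1 1) = dJ lam • refL l N j ∧
      Matrix.vecMul (refL l N j) (mono l N q s P lam 0 1) = 0 ∧
      Matrix.mulVec (mono l N q s P (lam * s) 0 0) (refR l N j) = aJ (lam * q) • refR l N j ∧
      Matrix.mulVec (mono l N q s P (lam * s) 1 1) (refR l N j) = dJ (lam / q) • refR l N j ∧
      Matrix.mulVec (mono l N q s P lam 0 1) (refR l N j) = 0 := by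
  intro lam hlam
  have hq1 : q ^ (2 * l + 1) = 1 := hq.pow_eq_one
  have hq0 : q ≠ 0 := by
    intro h; rw [h, zero_pow (by omega)] at hq1; exact zero_ne_one hq1
  have hs0 : s ≠ 0 := by
    intro h; apply hq0; rw [← hs, h]; ring
  have hss : lam * s / s = lam := mul_div_cancel_right₀ lam hs0
  -- values of q-powers at the reference indices
  have hvR : ∀ n, (q : ℂ) ^ ((((j n : ℕ) : Zp l)).val) = q ^ ((j n : ℤ)) := by
    intro n
    have h := qpow_val l q hq0 hq1 ((j n : ℤ))
    have hc : ((((j n : ℤ)) : ℤ) : Zp l) = ((j n : ℕ) : Zp l) := by push_cast; ring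
    rw [hc] at h; exact h
  have hvL : ∀ n, (q : ℂ) ^ ((((j n : ℕ) : Zp l) - 1).val) = q ^ ((j n : ℤ) - 1) := by
    intro n
    have h := qpow_val l q hq0 hq1 ((j n : ℤ) - 1)
    have hc : ((((j n : ℤ) - 1) : ℤ) : Zp l) = ((j n : ℕ) : Zp l) - 1 := by push_cast; ring
    rw [hc] at h; exact h
  -- the vanishing scalar
  have hc0 : ∀ n, P.a n / s * q ^ ((((j n : ℕ) : Zp l)).val)
      + s * P.b n * (q ^ ((((j n : ℕ) : Zp l)).val))⁻¹ = 0 := by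
    intro n
    refine ccol_zero q s (P.a n) (P.b n) _ hq0 hs0 hs (pow_ne_zero _ hq0) ?_
    rw [hcon n, hvR n]
    congr 1
    rw [← _root_.zpow_natCast (q ^ ((j n : ℤ))) 2, ← _root_.zpow_mul, ← zpow_neg_one q,
      ← zpow_add₀ hq0]
    norm_num
    ring_nf
  -- support of the reference states
  have hsuppR : ∀ n, Supp l N n ((j n : ℕ) : Zp l) (refR l N j) := by
    intro n x hx
    exact Finset.prod_eq_zero (Finset.mem_univ n) (if_neg hx)
  have hsuppL : ∀ n, Supp l N n (((j n : ℕ) : Zp l) - 1) (refL l N j) := by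
    intro n x hx
    exact Finset.prod_eq_zero (Finset.mem_univ n) (if_neg hx)
  -- local actions, left
  have hPresL : ∀ (μ : ℂ) n (i j' : Fin 2) (m : Fin N) (t' : Zp l) w, m ≠ n →
      Supp l N m t' w → Supp l N m t' (Matrix.vecMul w (laxSite l N q s P n μ i j')) := by
    intro μ n i j' m t' w hmn hw
    exact supp_site_vecMul l N n m _ t' hmn w hw
  have hPresR : ∀ (μ : ℂ) n (i j' : Fin 2) (m : Fin N) (t' : Zp l) w, m ≠ n →
      Supp l N m t' w → Supp l N m t' ((laxSite l N q s P n μ i j').mulVec w) := by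
    intro μ n i j' m t' w hmn hw
    exact supp_site_mulVec l N n m _ t' hmn w hw
  have hFL : ∀ (μ : ℂ) n w, Supp l N n (((j n : ℕ) : Zp l) - 1) w →
      (Matrix.vecMul w (laxSite l N q s P n μ 0 1) = 0 ∧
       Matrix.vecMul w (laxSite l N q s P n μ 0 0)
         = (μ * P.α n * q ^ ((((j n : ℕ) : Zp l) - 1).val)
            - P.β n / μ * (q ^ ((((j n : ℕ) : Zp l) - 1).val))⁻¹) • w ∧
       Matrix.vecMul w (laxSite l N q s P n μ 1 1)
         = (P.a n * P.c n / P.α n / μ * q ^ ((((j n : ℕ) : Zp l) - 1).val)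
            - P.b n * P.d n / P.β n * μ * (q ^ ((((j n : ℕ) : Zp l) - 1).val))⁻¹) • w) := by
    intro μ n w hw
    refine ⟨?_, ?_, ?_⟩
    · refine site_vecMul_zero l N n _ _ ?_ w hw
      intro k
      rw [laxM_01_apply]
      split_ifs with h
      · have hk : k = ((j n : ℕ) : Zp l) := by
          have h2 := congrArg (fun z => z + 1) h
          simpa [sub_add_cancel] using h2.symm
        rw [hk]; exact hc0 n
      · rfl
    · refine site_vecMul_eig l N n _ _ _ ?_ w hw
      intro k
      rw [laxM_00_apply]
    · refine site_vecMul_eig l N n _ _ _ ?_ w hw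
      intro k
      rw [laxM_11_apply]
  have hFR : ∀ (μ : ℂ) n w, Supp l N n ((j n : ℕ) : Zp l) w →
      ((laxSite l N q s P n μ 0 1).mulVec w = 0 ∧
       (laxSite l N q s P n μ 0 0).mulVec w
         = (μ * P.α n * q ^ ((((j n : ℕ) : Zp l)).val)
            - P.β n / μ * (q ^ ((((j n : ℕ) : Zp l)).val))⁻¹) • w ∧
       (laxSite l N q s P n μ 1 1).mulVec w
         = (P.a n * P.c n / P.α n / μ * q ^ ((((j n : ℕ) : Zp l)).val)
            - P.b n * P.d n / P.β n * μ * (q ^ ((((j n : ℕ) : Zp l)).val))⁻¹) • w) := by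
    intro μ n w hw
    refine ⟨?_, ?_, ?_⟩
    · refine site_mulVec_zero l N n _ _ ?_ w hw
      intro i
      rw [laxM_01_apply]
      split_ifs with h
      · exact hc0 n
      · rfl
    · refine site_mulVec_eig l N n _ _ _ ?_ w hw
      intro i
      rw [laxM_00_apply]
      split_ifs with h
      · rw [h]
      · rfl
    · refine site_mulVec_eig l N n _ _ _ ?_ w hw
      intro i
      rw [laxM_11_apply]
      split_ifs with h
      · rw [h]
      · rfl
  have nodupR : (List.finRange N).Nodup := List.nodup_finRange N
  have nodupL : ((List.finRange N).reverse).Nodup := List.nodup_reverse.mpr (List.nodup_finRange N)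
  obtain ⟨-, hAL, hDL, -⟩ := tri_left l N _ _ _ _ (hFL lam) (hPresL lam)
    ((List.finRange N).reverse) nodupL (refL l N j) (fun n _ => hsuppL n)
  obtain ⟨hBL, -, -, -⟩ := tri_left l N _ _ _ _ (hFL (lam / s)) (hPresL (lam / s))
    ((List.finRange N).reverse) nodupL (refL l N j) (fun n _ => hsuppL n)
  obtain ⟨-, hAR, hDR, -⟩ := tri_right l N _ _ _ _ (hFR lam) (hPresR lam)
    (List.finRange N) nodupR (refR l N j) (fun n _ => hsuppR n)
  obtain ⟨hBR, -, -, -⟩ := tri_right l N _ _ _ _ (hFR (lam / s)) (hPresR (lam / s))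
    (List.finRange N) nodupR (refR l N j) (fun n _ => hsuppR n)
  have hm1 : mono l N q s P (lam * s)
      = (((List.finRange N).reverse).map fun n => laxSite l N q s P n lam).prod := by
    rw [mono, hss]
  have hm2 : mono l N q s P lam
      = (((List.finRange N).reverse).map fun n => laxSite l N q s P n (lam / s)).prod := rfl
  -- scalar identities
  have hYne : ∀ n, (q : ℂ) ^ ((j n : ℤ) - 1) ≠ 0 := fun n => zpow_ne_zero _ hq0
  have e1 : ∀ n, (q : ℂ) ^ ((j n : ℤ)) = q ^ ((j n : ℤ) - 1) * q := by
    intro n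
    rw [← zpow_add_one₀ hq0]
    norm_num
  have e2 : ∀ n, (q : ℂ) ^ (1 - (j n : ℤ)) = (q ^ ((j n : ℤ) - 1))⁻¹ := by
    intro n
    rw [← _root_.zpow_neg, neg_sub]
  have hlistprod : ∀ f : Fin N → ℂ,
      ((((List.finRange N).reverse).map f).prod) = ∏ n, f n := by
    intro f
    rw [List.map_reverse, List.prod_reverse, Fin.prod_univ_def]
  have hscalAL : (∏ n, (lam * P.α n * q ^ ((((j n : ℕ) : Zp l) - 1).val)
      - P.β n / lam * (q ^ ((((j n : ℕ) : Zp l) - 1).val))⁻¹)) = aJ lam := by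
    rw [haJ lam]
    refine Finset.prod_congr rfl fun n _ => ?_
    rw [hvL n, e2 n]; ring
  have hscalDL : (∏ n, (P.a n * P.c n / P.α n / lam * q ^ ((((j n : ℕ) : Zp l) - 1).val)
      - P.b n * P.d n / P.β n * lam * (q ^ ((((j n : ℕ) : Zp l) - 1).val))⁻¹)) = dJ lam := by
    rw [hdJ lam]
    refine Finset.prod_congr rfl fun n _ => ?_
    rw [hvL n, e2 n]; ring
  have hscalAR : (∏ n, (lam * P.α n * q ^ ((((j n : ℕ) : Zp l)).val)
      - P.β n / lam * (q ^ ((((j n : ℕ) : Zp l)).val))⁻¹)) = aJ (lam * q) := by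
    rw [haJ (lam * q)]
    refine Finset.prod_congr rfl fun n _ => ?_
    rw [hvR n, e1 n, e2 n]
    field_simp
  have hscalDR : (∏ n, (P.a n * P.c n / P.α n / lam * q ^ ((((j n : ℕ) : Zp l)).val)
      - P.b n * P.d n / P.β n * lam * (q ^ ((((j n : ℕ) : Zp l)).val))⁻¹)) = dJ (lam / q) := by
    rw [hdJ (lam / q)]
    refine Finset.prod_congr rfl fun n _ => ?_
    rw [hvR n, e1 n, e2 n]
    have hα := (hP n).1
    have hβ := (hP n).2.1
    field_simp
  refine ⟨?_, ?_, ?_, ?_, ?_, ?_⟩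
  · rw [hm1, hAL, hlistprod, hscalAL]
  · rw [hm1, hDL, hlistprod, hscalDL]
  · rw [hm2]; exact hBL
  · rw [hm1, hAR, ← Fin.prod_univ_def, hscalAR]
  · rw [hm1, hDR, ← Fin.prod_univ_def, hscalDR]
  · rw [hm2]; exact hBR


end SixV
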